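/- The function C(v) := ∫_{ℝ³} G(v,v') dv' is uniformly bounded in v: sup_{v∈ℝ³} ∫_{ℝ³} G(v,v') dv' < ∞, where G is the symmetric Gaussian-type kernel G(v,v') = C₀|v-v'|^{-1} exp{-(m₁/(8θ₁))((1+μ)²|v-v'|² + (|v-u₁|²-|v'-u₁|²)²/|v-v'|²)}. -/

import Mathlib

open MeasureTheory Real Classical

noncomputable section

private lemma aux_int_1d (c : ℝ) (hc : 0 < c) :
    Integrable (fun t : ℝ => |t| ^ (-(1/3) : ℝ) * Real.exp (-c * t ^ 2)) := by
  set g := fun t : ℝ => |t| ^ (-(1/3) : ℝ) * Real.exp (-c * t ^ 2) with hg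
  have h1 : IntegrableOn (fun x : ℝ => x ^ (-(1/3) : ℝ) * Real.exp (-c * x ^ 2)) (Set.Ioi 0) :=
    integrableOn_rpow_mul_exp_neg_mul_sq hc (by norm_num)
  have h2 : IntegrableOn g (Set.Ioi 0) := by
    refine h1.congr_fun (fun x hx => ?_) measurableSet_Ioi
    rw [hg]; simp only; rw [abs_of_pos hx]
  have h3 : IntegrableOn g (Set.Iic 0) := by
    rw [← Measure.map_neg_eq_self (volume : Measure ℝ)]
    have m : MeasurableEmbedding fun x : ℝ => -x := (Homeomorph.neg ℝ).measurableEmbedding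
    rw [m.integrableOn_map_iff]
    have : (fun x : ℝ => -x) ⁻¹' Set.Iic 0 = Set.Ici 0 := by
      ext x; simp
    rw [this]
    have : (g ∘ fun x : ℝ => -x) = g := by
      funext x; simp [hg]
    rw [this]
    exact (integrableOn_Ici_iff_integrableOn_Ioi (by simp [hg])).2 h2
  rw [← integrableOn_univ, ← Set.Iic_union_Ioi (a := (0:ℝ)), integrableOn_union]
  exact ⟨h3, h2⟩

private lemma aux_int_3d (c : ℝ) (hc : 0 < c) :
    Integrable (fun x : EuclideanSpace ℝ (Fin 3) => ‖x‖⁻¹ * Real.exp (-c * ‖x‖ ^ 2)) := by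
  have e := (EuclideanSpace.volume_preserving_symm_measurableEquiv_toLp (Fin 3)).symm
  rw [← e.integrable_comp_emb (MeasurableEquiv.measurableEmbedding _)]
  set g := fun t : ℝ => |t| ^ (-(1/3) : ℝ) * Real.exp (-c * t ^ 2) with hgdef
  have hgnn : ∀ t, 0 ≤ g t := fun t => mul_nonneg (Real.rpow_nonneg (abs_nonneg t) _) (Real.exp_pos _).le
  have hint : Integrable (fun y : Fin 3 → ℝ => ∏ i, g (y i)) :=
    Integrable.fintype_prod (𝕜 := ℝ) (fun _ => aux_int_1d c hc)
  apply hint.mono'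
  · have hm : Measurable (fun x : EuclideanSpace ℝ (Fin 3) => ‖x‖⁻¹ * Real.exp (-c * ‖x‖ ^ 2)) :=
      (measurable_norm.inv).mul ((measurable_norm.pow_const 2).const_mul (-c)).exp
    exact (hm.comp (MeasurableEquiv.measurable _)).aestronglyMeasurable
  · have h0 : ∀ᵐ y : Fin 3 → ℝ, ∀ i, y i ≠ 0 := by
      rw [show (volume : Measure (Fin 3 → ℝ)) = Measure.pi fun _ => volume from volume_pi]
      exact ae_all_iff.2 fun i => Measure.ae_eval_ne _ i 0
    filter_upwards [h0] with y hy
    have hnorm : ‖((MeasurableEquiv.toLp 2 (Fin 3 → ℝ)).symm.symm y : EuclideanSpace ℝ (Fin 3))‖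
        = Real.sqrt (∑ i, y i ^ 2) := by
      simp only [MeasurableEquiv.symm_symm, MeasurableEquiv.toLp_apply,
        EuclideanSpace.norm_eq, PiLp.toLp_apply, Real.norm_eq_abs, sq_abs]
    set r := Real.sqrt (∑ i, y i ^ 2) with hr
    have hsum_nonneg : 0 ≤ ∑ i, y i ^ 2 := Finset.sum_nonneg fun i _ => sq_nonneg _
    have hsumpos : 0 < ∑ i, y i ^ 2 := by
      apply Finset.sum_pos' (fun i _ => sq_nonneg _)
      refine ⟨0, Finset.mem_univ 0, ?_⟩
      have : (0:ℝ) < |y 0| := abs_pos.2 (hy 0)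
      rw [← sq_abs]; positivity
    have hrpos : 0 < r := Real.sqrt_pos.2 hsumpos
    have hr2 : r ^ 2 = ∑ i, y i ^ 2 := Real.sq_sqrt hsum_nonneg
    have habs_le : ∀ i, |y i| ≤ r := by
      intro i
      rw [hr, ← Real.sqrt_sq_eq_abs]
      exact Real.sqrt_le_sqrt (Finset.single_le_sum (fun j _ => sq_nonneg (y j)) (Finset.mem_univ i))
    have key : r⁻¹ * Real.exp (-c * r ^ 2) ≤ ∏ i, g (y i) := by
      rw [hgdef]
      simp only
      rw [Finset.prod_mul_distrib, ← Real.exp_sum]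
      have hexp : ∑ i : Fin 3, -c * y i ^ 2 = -c * r ^ 2 := by
        rw [hr2, Finset.mul_sum]
      rw [hexp]
      apply mul_le_mul_of_nonneg_right _ (Real.exp_pos _).le
      have h1 : r⁻¹ = ∏ _i : Fin 3, r ^ (-(1/3) : ℝ) := by
        rw [Finset.prod_const, Finset.card_univ, Fintype.card_fin,
          ← Real.rpow_natCast (r ^ (-(1/3):ℝ)) 3, ← Real.rpow_mul hrpos.le]
        norm_num [Real.rpow_neg_one]
      rw [h1]
      apply Finset.prod_le_prod (fun i _ => Real.rpow_nonneg hrpos.le _)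
      intro i _
      exact Real.rpow_le_rpow_of_nonpos (abs_pos.2 (hy i)) (habs_le i) (by norm_num)
    simp only [Function.comp_apply]
    rw [hnorm, Real.norm_eq_abs,
      abs_of_nonneg (mul_nonneg (inv_nonneg.2 hrpos.le) (Real.exp_pos _).le)]
    exact key

/-- Uniform boundedness of `v ↦ ∫ G(v,v') dv'` for the symmetric
Gaussian-type kernel `G`. -/
theorem symmetrized_kernel_row_integral_bounded
    (m₁ θ₁ μ : ℝ) (hm₁ : 0 < m₁) (hθ₁ : 0 < θ₁) (hμ : 0 < μ)
    (u₁ : EuclideanSpace ℝ (Fin 3))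
    (G : EuclideanSpace ℝ (Fin 3) → EuclideanSpace ℝ (Fin 3) → ℝ)
    (hG : ∀ v v' : EuclideanSpace ℝ (Fin 3),
      G v v' = if v = v' then 0 else
        Real.sqrt (m₁ / (2 * Real.pi * θ₁)) * ‖v - v'‖⁻¹ *
          Real.exp (-(m₁ / (8 * θ₁)) *
            ((1 + μ) ^ 2 * ‖v - v'‖ ^ 2
              + (‖v - u₁‖ ^ 2 - ‖v' - u₁‖ ^ 2) ^ 2 / ‖v - v'‖ ^ 2))) :
    ∃ B : ℝ, ∀ v : EuclideanSpace ℝ (Fin 3), ∫ v', G v v' ≤ B := by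
  set k := m₁ / (8 * θ₁) with hk
  have hkpos : 0 < k := by positivity
  set c := k * (1 + μ) ^ 2 with hc
  have hcpos : 0 < c := by positivity
  set C₀ := Real.sqrt (m₁ / (2 * Real.pi * θ₁)) with hC₀
  have hC₀nn : 0 ≤ C₀ := Real.sqrt_nonneg _
  set H : EuclideanSpace ℝ (Fin 3) → ℝ :=
    fun x => C₀ * (‖x‖⁻¹ * Real.exp (-c * ‖x‖ ^ 2)) with hH
  have hHint : Integrable H := (aux_int_3d c hcpos).const_mul C₀
  have hHnn : ∀ x, 0 ≤ H x := fun x => by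
    apply mul_nonneg hC₀nn
    exact mul_nonneg (inv_nonneg.2 (norm_nonneg _)) (Real.exp_pos _).le
  have hbound : ∀ v v', G v v' ≤ H (v - v') := by
    intro v v'
    rw [hG]
    by_cases h : v = v'
    · simp only [h, if_pos rfl]
      exact hHnn _
    · rw [if_neg h]
      have hd : (0:ℝ) < ‖v - v'‖ := by
        rw [norm_pos_iff, sub_ne_zero]; exact h
      rw [hH, mul_assoc]
      apply mul_le_mul_of_nonneg_left _ hC₀nn
      apply mul_le_mul_of_nonneg_left _ (inv_nonneg.2 hd.le)
      apply Real.exp_le_exp.2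
      have hq : 0 ≤ (‖v - u₁‖ ^ 2 - ‖v' - u₁‖ ^ 2) ^ 2 / ‖v - v'‖ ^ 2 := by positivity
      rw [hc]
      nlinarith [hkpos.le]
  refine ⟨∫ x, H x, fun v => ?_⟩
  by_cases hi : Integrable (fun v' => G v v')
  · have h2 : Integrable (fun v' => H (v - v')) := (integrable_comp_sub_left H v).2 hHint
    have h3 : ∫ v', G v v' ≤ ∫ v', H (v - v') := integral_mono hi h2 (fun v' => hbound v v')
    have h4 : (∫ v', H (v - v')) = ∫ x, H x := integral_sub_left_eq_self H volume v
    linarith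
  · rw [integral_undef hi]
    exact integral_nonneg hHnn
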